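/- Every tree with the fine wedge topology is a Fréchet–Urysohn space: whenever t lies in the closure of a set A, there is a sequence of elements of A converging to t. -/

import Mathlib

/-- A tree: a partial order in which the set of strict predecessors of every
element is well-ordered. -/
def IsTree (α : Type*) [PartialOrder α] : Prop :=
  ∀ t : α, IsWellOrder {s : α // s < t} (fun a b => (a : α) < b)

/-- The fine wedge topology: generated by the subbase of all wedges
`V t = Ici t` and all their complements. -/
def fineWedgeTopology (α : Type*) [PartialOrder α] : TopologicalSpace α :=
  TopologicalSpace.generateFrom
    {S | ∃ t : α, S = Set.Ici t ∨ S = (Set.Ici t)ᶜ}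

/-- In a tree, two elements below a common element are comparable. -/
lemma tree_comparable {α : Type*} [PartialOrder α] (htree : IsTree α)
    {a b c : α} (ha : a ≤ c) (hb : b ≤ c) : a ≤ b ∨ b ≤ a := by
  rcases eq_or_lt_of_le ha with rfl | ha'
  · exact Or.inr hb
  rcases eq_or_lt_of_le hb with rfl | hb'
  · exact Or.inl ha'.le
  have h := htree c
  rcases (haveI := h; trichotomous_of (fun a b : {s : α // s < c} => (a : α) < b) ⟨a, ha'⟩ ⟨b, hb'⟩) with h1 | h1 | h1
  · exact Or.inl h1.le
  · exact Or.inl (le_of_eq (congrArg Subtype.val h1))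
  · exact Or.inr h1.le

/-- The interval `(t, x]` has a least element. -/
lemma tree_exists_min {α : Type*} [PartialOrder α] (htree : IsTree α)
    {t x : α} (h : t < x) :
    ∃ m, t < m ∧ m ≤ x ∧ ∀ y, t < y → y ≤ x → m ≤ y := by
  by_cases hex : ∃ y, t < y ∧ y < x
  · obtain ⟨y0, hy01, hy02⟩ := hex
    have wf : WellFounded (fun a b : {s : α // s < x} => (a : α) < b) := (htree x).wf
    set Q : Set {s : α // s < x} := {s | t < (s : α)} with hQdef
    have hQ : Q.Nonempty := ⟨⟨y0, hy02⟩, hy01⟩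
    set m := wf.min Q hQ with hm
    have hmQ : m ∈ Q := wf.min_mem Q hQ
    have hleast : ∀ s ∈ Q, (m : α) ≤ (s : α) := by
      intro s hs
      rcases (haveI := htree x; trichotomous_of (fun a b : {s : α // s < x} => (a : α) < b) s m) with h1 | h1 | h1
      · exact absurd h1 (wf.not_lt_min Q hs)
      · exact le_of_eq (congrArg Subtype.val h1.symm)
      · exact h1.le
    refine ⟨(m : α), hmQ, m.2.le, fun y hy1 hy2 => ?_⟩
    rcases eq_or_lt_of_le hy2 with rfl | hy3
    · exact m.2.le
    · exact hleast ⟨y, hy3⟩ hy1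
  · refine ⟨x, h, le_rfl, fun y hy1 hy2 => ?_⟩
    rcases eq_or_lt_of_le hy2 with rfl | hy3
    · exact le_rfl
    · exact absurd ⟨y, hy1, hy3⟩ hex

theorem stmt_18 {α : Type*} [PartialOrder α] [τ : TopologicalSpace α]
    (hτ : τ = fineWedgeTopology α) (htree : IsTree α) :
    ∀ (A : Set α) (t : α), t ∈ closure A →
      ∃ u : ℕ → α, (∀ n, u n ∈ A) ∧
        Filter.Tendsto u Filter.atTop (nhds t) := by
  subst hτ
  letI : TopologicalSpace α := fineWedgeTopology α
  intro A t ht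
  by_cases htA : t ∈ A
  · exact ⟨fun _ => t, fun _ => htA, tendsto_const_nhds⟩
  -- the set of minima of intervals (t, x] for x ∈ A above t
  set M : Set α := {m | t < m ∧ ∃ x ∈ A, m ≤ x ∧ ∀ y, t < y → y ≤ x → m ≤ y} with hMdef
  have hMinf : M.Infinite := by
    by_contra hfin
    rw [Set.not_infinite] at hfin
    set F := hfin.toFinset with hF
    set U : Set α := Set.Ici t ∩ ⋂ m ∈ F, (Set.Ici m)ᶜ with hU
    have hUopen : IsOpen U := by
      refine IsOpen.inter ?_ (isOpen_biInter_finset fun m _ => ?_)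
      · exact TopologicalSpace.isOpen_generateFrom_of_mem ⟨t, Or.inl rfl⟩
      · exact TopologicalSpace.isOpen_generateFrom_of_mem ⟨m, Or.inr rfl⟩
    have htU : t ∈ U := by
      refine ⟨le_rfl, Set.mem_iInter₂.2 fun m hm => ?_⟩
      have hm' : m ∈ M := hfin.mem_toFinset.mp hm
      exact fun hle => absurd (lt_of_lt_of_le hm'.1 hle) (lt_irrefl t)
    obtain ⟨x, hxU, hxA⟩ := (mem_closure_iff.mp ht) U hUopen htU
    have htx : t < x := lt_of_le_of_ne hxU.1 (fun he => htA (he ▸ hxA))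
    obtain ⟨m, hm1, hm2, hm3⟩ := tree_exists_min htree htx
    have hmM : m ∈ M := ⟨hm1, x, hxA, hm2, hm3⟩
    have := Set.mem_iInter₂.mp hxU.2 m (hfin.mem_toFinset.mpr hmM)
    exact this hm2
  -- choose a sequence of distinct minima and witnesses in A
  set e := hMinf.natEmbedding with he
  have hinj : Function.Injective fun n => (e n : α) := fun a b hab =>
    e.injective (Subtype.ext hab)
  have hmem : ∀ n, ((e n : α)) ∈ M := fun n => (e n).2
  have hex : ∀ n, ∃ x, x ∈ A ∧ (e n : α) ≤ x ∧ ∀ y, t < y → y ≤ x → (e n : α) ≤ y := by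
    intro n
    obtain ⟨_, x, hxA, h1, h2⟩ := hmem n
    exact ⟨x, hxA, h1, h2⟩
  choose u huA hule humin using hex
  have htu : ∀ n, t < u n := fun n => lt_of_lt_of_le (hmem n).1 (hule n)
  refine ⟨u, huA, ?_⟩
  refine (TopologicalSpace.tendsto_nhds_generateFrom_iff (g := {S | ∃ t : α, S = Set.Ici t ∨ S = (Set.Ici t)ᶜ})).2 ?_
  rintro S ⟨s, rfl | rfl⟩ htS
  · -- S = Ici s, s ≤ t
    exact Filter.eventually_atTop.2 ⟨0, fun n _ => le_trans htS (htu n).le⟩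
  · -- S = (Ici s)ᶜ, ¬ s ≤ t
    have hst : ¬ s ≤ t := htS
    -- if s ≤ u n, then t < s and e n = min (t, s]
    by_cases hts : t < s
    · obtain ⟨σ, hσ1, hσ2, hσ3⟩ := tree_exists_min htree hts
      have key : ∀ n, s ≤ u n → (e n : α) = σ := by
        intro n hsu
        have h1 : (e n : α) ≤ σ := humin n σ hσ1 (le_trans hσ2 hsu)
        have h2 : σ ≤ (e n : α) := hσ3 _ (hmem n).1 (humin n s hts hsu)
        exact le_antisymm h1 h2
      have hfin : {n : ℕ | (e n : α) = σ}.Finite := by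
        apply Set.Subsingleton.finite
        intro a ha b hb
        exact hinj (ha.trans hb.symm)
      have : ∀ᶠ n in Filter.cofinite, n ∉ {n : ℕ | (e n : α) = σ} :=
        hfin.eventually_cofinite_notMem
      rw [Nat.cofinite_eq_atTop] at this
      filter_upwards [this] with n hn hsu
      exact hn (key n hsu)
    · -- s incomparable with t: s ≤ u n is impossible
      refine Filter.eventually_atTop.2 ⟨0, fun n _ hsu => ?_⟩
      rcases tree_comparable htree (hsu : s ≤ u n) (htu n).le with h | h
      · exact hst h
      · exact hts (lt_of_le_of_ne h (fun he => hst he.symm.le))
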